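/- arXiv:1202.3093 — 2 statements merged into one kernel-verified Lean document; each statement's English description precedes it below -/
import Mathlib

section
/- Goldbach's theorem: the series of the values of the Riemann zeta function at the integers n ≥ 2, each diminished by 1, sums to 1; that is, ∑_{n=2}^∞ (ζ(n) − 1) = 1. -/
open Filter Topology

private lemma telescope_hasSum : HasSum (fun k : ℕ => (1:ℝ)/(k+1) - 1/(k+2)) 1 := by
  have hnn : ∀ k : ℕ, 0 ≤ (1:ℝ)/(k+1) - 1/(k+2) := by
    intro k
    have : (1:ℝ)/(k+2) ≤ 1/(k+1) := by
      apply one_div_le_one_div_of_le <;> linarith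
    linarith
  rw [hasSum_iff_tendsto_nat_of_nonneg hnn]
  have key : ∀ n : ℕ, ∑ i ∈ Finset.range n, ((1:ℝ)/(i+1) - 1/(i+2)) = 1 - 1/(n+1) := by
    intro n
    have := Finset.sum_range_sub' (f := fun i : ℕ => (1:ℝ)/(i+1)) n
    simpa [show ∀ x : ℕ, ((x:ℝ)+1+1) = (x:ℝ)+2 from fun x => by ring] using this
  simp only [key]
  have : Tendsto (fun n : ℕ => (1:ℝ)/(n+1)) atTop (𝓝 0) :=
    tendsto_one_div_add_atTop_nhds_zero_nat
  simpa using (tendsto_const_nhds (x := (1:ℝ)).sub this)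

private lemma geom_k (k : ℕ) :
    ∑' n : ℕ, (1:ℝ)/(k+2)^(n+2) = 1/(k+1) - 1/(k+2) := by
  have hk2 : (0:ℝ) < (k:ℝ) + 2 := by positivity
  have hk1 : (0:ℝ) < (k:ℝ) + 1 := by positivity
  set r : ℝ := 1/((k:ℝ)+2) with hr
  have hr0 : 0 ≤ r := by positivity
  have hr1 : r < 1 := by
    rw [hr, div_lt_one hk2]; linarith
  have hcongr : (fun n : ℕ => (1:ℝ)/(k+2)^(n+2)) = fun n : ℕ => r^2 * r^n := by
    funext n
    rw [hr, ← pow_add, one_div_pow, add_comm 2 n]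
  rw [hcongr, tsum_mul_left, tsum_geometric_of_lt_one hr0 hr1]
  have h1r : 1 - r = ((k:ℝ)+1)/((k:ℝ)+2) := by
    rw [hr]; field_simp; ring
  rw [h1r, hr]
  rw [inv_div]
  field_simp
  ring

private lemma summable_geom_k (k : ℕ) :
    Summable (fun n : ℕ => (1:ℝ)/(k+2)^(n+2)) := by
  have hk2 : (0:ℝ) < (k:ℝ) + 2 := by positivity
  have hr1 : 1/((k:ℝ)+2) < 1 := by rw [div_lt_one hk2]; linarith
  have := (summable_geometric_of_lt_one (by positivity) hr1).mul_left ((1/((k:ℝ)+2))^2)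
  refine this.congr fun n => ?_
  rw [← pow_add, one_div_pow, add_comm 2 n]

private lemma summable_pair :
    Summable (fun p : ℕ × ℕ => (1:ℝ)/(p.1+2)^(p.2+2)) := by
  rw [summable_prod_of_nonneg (fun p => by positivity)]
  constructor
  · intro k; exact summable_geom_k k
  · refine Summable.congr ?_ (fun k => (geom_k k).symm)
    exact telescope_hasSum.summable

/-- Goldbach's theorem: `∑_{n=2}^∞ (ζ(n) − 1) = 1`, where for real `s > 1`,
`ζ(s) = ∑_{k=1}^∞ k^(−s)`.  The outer sum is indexed by `n : ℕ` via `n ↦ n + 2`,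
and the inner sum by `k : ℕ` via `k ↦ k + 1`. -/
theorem goldbach_zeta_sum :
    ∑' n : ℕ, ((∑' k : ℕ, (1 : ℝ) / (k + 1) ^ (n + 2)) - 1) = 1 := by
  have hsum : ∀ n : ℕ, Summable (fun k : ℕ => (1:ℝ)/(k+1)^(n+2)) := by
    intro n
    have h := (Real.summable_one_div_nat_pow (p := n+2)).mpr (by omega)
    have := h.comp_injective (add_right_injective 1)
    refine this.congr fun k => ?_
    simp [Function.comp, add_comm]
  have step : ∀ n : ℕ, (∑' k : ℕ, (1:ℝ)/(k+1)^(n+2)) - 1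
      = ∑' k : ℕ, (1:ℝ)/(k+2)^(n+2) := by
    intro n
    rw [Summable.tsum_eq_zero_add (hsum n)]
    norm_num
    exact tsum_congr fun k => by ring_nf
  calc ∑' n : ℕ, ((∑' k : ℕ, (1 : ℝ) / (k + 1) ^ (n + 2)) - 1)
      = ∑' n : ℕ, ∑' k : ℕ, (1:ℝ)/(k+2)^(n+2) := tsum_congr step
    _ = ∑' k : ℕ, ∑' n : ℕ, (1:ℝ)/(k+2)^(n+2) :=
        Summable.tsum_comm (f := fun (k n : ℕ) => (1:ℝ)/(k+2)^(n+2)) summable_pair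
    _ = ∑' k : ℕ, ((1:ℝ)/(k+1) - 1/(k+2)) := tsum_congr geom_k
    _ = 1 := telescope_hasSum.tsum_eq
end

section
/- Kluyver's formula for Euler's constant: γ = ∑_{k=1}^∞ a_k / k, where a_k are Kluyver's numbers. -/
open MeasureTheory Filter Finset Real

lemma kprodpos (n k : ℕ) : (0:ℝ) < ∏ i ∈ range k, ((n:ℝ)+1+i) :=
  Finset.prod_pos (fun i _ => by positivity)


lemma hasSum_of_tendsto_nonneg {g : ℕ → ℝ} (hg : ∀ k, 0 ≤ g k) {L : ℝ}
    (h : Tendsto (fun n => ∑ k ∈ range n, g k) atTop (nhds L)) : HasSum g L := by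
  have hmono : Monotone (fun n => ∑ k ∈ range n, g k) :=
    monotone_nat_of_le_succ (fun n => by
      rw [Finset.sum_range_succ]; exact le_add_of_nonneg_right (hg n))
  have hs : Summable g := summable_of_sum_range_le hg (fun n => hmono.ge_of_tendsto h n)
  have := hs.hasSum.tendsto_sum_nat
  have : L = ∑' k, g k := tendsto_nhds_unique h this
  exact this ▸ hs.hasSum

lemma lemA : HasSum (fun n : ℕ => 1/(n+1:ℝ) - Real.log ((n+2)/(n+1)))
    Real.eulerMascheroniConstant := by
  apply hasSum_of_tendsto_nonneg
  · intro n
    have h1 : (0:ℝ) < (n+1) := by positivity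
    have := Real.log_le_sub_one_of_pos (show (0:ℝ) < (n+2)/(n+1) by positivity)
    have h2 : ((n:ℝ)+2)/(n+1) - 1 = 1/(n+1) := by field_simp; norm_num
    rw [h2] at this; linarith
  · have key : ∀ n : ℕ, ∑ k ∈ range n, (1/(k+1:ℝ) - Real.log ((k+2)/(k+1)))
        = (harmonic n : ℝ) - Real.log (n+1) := by
      intro n
      rw [Finset.sum_sub_distrib]
      congr 1
      · rw [harmonic]; push_cast; simp [one_div]
      · have : ∀ k ∈ range n, Real.log ((k+2:ℝ)/(k+1))
            = Real.log (k+1+1) - Real.log (k+1) := by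
          intro k _
          rw [Real.log_div (by positivity) (by positivity)]
          norm_num
          ring_nf
        rw [Finset.sum_congr rfl this]
        have := Finset.sum_range_sub (fun k : ℕ => Real.log (k+1)) n
        push_cast at this ⊢
        rw [this]
        norm_num
    simpa only [key] using Real.tendsto_harmonic_sub_log_add_one

lemma lemB (n : ℕ) : ∫ x in (0:ℝ)..1, x/((n+1)*((n+1)+x))
    = 1/(n+1:ℝ) - Real.log ((n+2)/(n+1)) := by
  have hm : (0:ℝ) < n+1 := by positivity
  have key : ∀ x ∈ Set.uIcc (0:ℝ) 1, x/((n+1)*((n+1)+x)) = 1/(n+1:ℝ) - ((n+1)+x)⁻¹ := by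
    intro x hx
    rw [Set.uIcc_of_le (by norm_num)] at hx
    have : (0:ℝ) < (n+1)+x := by have := hx.1; linarith
    field_simp; ring
  rw [intervalIntegral.integral_congr key, intervalIntegral.integral_sub
    (intervalIntegrable_const (c := 1/(n+1:ℝ))) ?_]
  · rw [intervalIntegral.integral_const]
    have h2 : ∫ x in (0:ℝ)..1, ((n+1)+x)⁻¹ = Real.log ((n+2)/(n+1)) := by
      have := intervalIntegral.integral_comp_add_left (a := (0:ℝ)) (b := 1)
        (fun y => y⁻¹) ((n:ℝ)+1)
      rw [this, integral_inv_of_pos (by positivity) (by push_cast; linarith)]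
      norm_num
      congr 2
      ring
    rw [h2]; norm_num
  · apply ContinuousOn.intervalIntegrable
    apply ContinuousOn.inv₀ (by fun_prop)
    intro x hx
    rw [Set.uIcc_of_le (by norm_num)] at hx
    have := hx.1; positivity

noncomputable def ck (k : ℕ) (x : ℝ) : ℝ := x * ∏ j ∈ range k, (1 - x + j)


lemma lemC (n : ℕ) {x : ℝ} (hx0 : 0 ≤ x) (hx1 : x ≤ 1) :
    HasSum (fun k : ℕ => ck k x / ∏ i ∈ range (k+2), ((n:ℝ)+1+i))
      (x/((n+1)*((n+1)+x))) := by
  have hden : ∀ k, (0:ℝ) < ∏ i ∈ range k, ((n:ℝ)+1+i) := fun k => kprodpos n k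
  have hnum : ∀ k, (0:ℝ) ≤ ∏ j ∈ range k, (1 - x + j) :=
    fun k => Finset.prod_nonneg (fun j _ => by push_cast; linarith)
  have hnx : (0:ℝ) < (n+1) + x := by positivity
  set f : ℕ → ℝ := fun k =>
    (x * ∏ j ∈ range k, (1 - x + j)) / (((n+1) + x) * ∏ i ∈ range (k+1), ((n:ℝ)+1+i))
    with hf
  have htel : ∀ k, ck k x / ∏ i ∈ range (k+2), ((n:ℝ)+1+i) = f k - f (k+1) := by
    intro k
    rw [hf]
    simp only [ck]
    rw [prod_range_succ (fun j => (1 - x + (j:ℝ))) k,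
        prod_range_succ (fun i => ((n:ℝ)+1+i)) (k+1)]
    have h1 := (hden (k+1)).ne'
    have h2 : ((n:ℝ)+1+(k+1)) ≠ 0 := by positivity
    field_simp
    push_cast; ring
  apply hasSum_of_tendsto_nonneg
  · intro k
    exact div_nonneg (mul_nonneg hx0 (hnum k)) (hden (k+2)).le
  · have hsum : ∀ K, ∑ k ∈ range K, (ck k x / ∏ i ∈ range (k+2), ((n:ℝ)+1+i))
        = f 0 - f K := by
      intro K
      simp only [htel]
      exact Finset.sum_range_sub' f K
    have hf0 : f 0 = x/((n+1)*((n+1)+x)) := by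
      rw [hf]; simp [prod_range_succ]; ring_nf
    have hbound : ∀ k, f k ≤ 1/(k+1:ℝ) := by
      intro k
      rw [hf]
      have hnumle : x * ∏ j ∈ range k, (1 - x + j) ≤ (k.factorial : ℝ) := by
        calc x * ∏ j ∈ range k, (1 - x + j) ≤ 1 * ∏ j ∈ range k, ((j:ℝ)+1) := by
              apply mul_le_mul hx1 ?_ (hnum k) zero_le_one
              apply Finset.prod_le_prod (fun j _ => by push_cast; linarith)
                (fun j _ => by push_cast; linarith)
          _ = (k.factorial : ℝ) := by
              rw [one_mul]
              push_cast [← Finset.prod_range_add_one_eq_factorial]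
              rfl
      have hdenge : ((k+1).factorial : ℝ) ≤ ((n+1) + x) * ∏ i ∈ range (k+1), ((n:ℝ)+1+i) := by
        calc ((k+1).factorial : ℝ) = 1 * ∏ i ∈ range (k+1), ((i:ℝ)+1) := by
              rw [one_mul]; push_cast [← Finset.prod_range_add_one_eq_factorial]; rfl
          _ ≤ ((n+1) + x) * ∏ i ∈ range (k+1), ((n:ℝ)+1+i) := by
              apply mul_le_mul (by push_cast; linarith) ?_
                (Finset.prod_nonneg (fun i _ => by positivity)) (by positivity)
              apply Finset.prod_le_prod (fun i _ => by positivity)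
                (fun i _ => by push_cast; linarith [Nat.cast_nonneg (α := ℝ) n])
      calc (x * ∏ j ∈ range k, (1 - x + j)) / (((n+1) + x) * ∏ i ∈ range (k+1), ((n:ℝ)+1+i))
          ≤ (k.factorial : ℝ) / ((k+1).factorial : ℝ) := by
            apply div_le_div₀ (by positivity) hnumle (by positivity) hdenge
        _ = 1/(k+1:ℝ) := by
            rw [Nat.factorial_succ]
            push_cast
            rw [div_eq_div_iff (by positivity) (by positivity)]
            ring
    have hfnonneg : ∀ k, 0 ≤ f k := by
      intro k
      exact div_nonneg (mul_nonneg hx0 (hnum k)) (by positivity)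
    have hft : Tendsto f atTop (nhds 0) := by
      apply squeeze_zero hfnonneg hbound
      exact tendsto_one_div_add_atTop_nhds_zero_nat
    have := (tendsto_const_nhds (x := f 0)).sub hft
    rw [sub_zero] at this
    simp only [hsum, hf0] at this ⊢
    exact this



lemma lemD (k : ℕ) : HasSum (fun n : ℕ => 1/∏ i ∈ range (k+2), ((n:ℝ)+1+i))
    (1/(((k:ℝ)+1)*((k+1).factorial : ℝ))) := by
  set q : ℕ → ℝ := fun n => (1/((k:ℝ)+1)) * (1/∏ i ∈ range (k+1), ((n:ℝ)+1+i)) with hq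
  have htel : ∀ n : ℕ, 1/∏ i ∈ range (k+2), ((n:ℝ)+1+i) = q n - q (n+1) := by
    intro n
    have hC1 : ∏ i ∈ range (k+2), ((n:ℝ)+1+i)
        = (∏ i ∈ range (k+1), ((n:ℝ)+1+i)) * ((n:ℝ)+1+(k+1)) := by
      rw [prod_range_succ]; push_cast; ring_nf
    have hC2 : ∏ i ∈ range (k+2), ((n:ℝ)+1+i)
        = ((n:ℝ)+1) * ∏ i ∈ range (k+1), (((n+1:ℕ):ℝ)+1+i) := by
      rw [prod_range_succ' (fun i => ((n:ℝ)+1+i)) (k+1)]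
      push_cast; ring_nf
    set A := ∏ i ∈ range (k+1), ((n:ℝ)+1+i) with hA
    set B := ∏ i ∈ range (k+1), (((n+1:ℕ):ℝ)+1+i) with hB
    set C := ∏ i ∈ range (k+2), ((n:ℝ)+1+i) with hC
    have hApos : (0:ℝ) < A := kprodpos n (k+1)
    have hBpos : (0:ℝ) < B := kprodpos (n+1) (k+1)
    have hCpos : (0:ℝ) < C := kprodpos n (k+2)
    show 1/C = 1/((k:ℝ)+1) * (1/A) - 1/((k:ℝ)+1) * (1/B)
    have e1 : (1:ℝ)/A = ((n:ℝ)+1+((k:ℝ)+1))/C := by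
      rw [hC1]; field_simp
    have e2 : (1:ℝ)/B = ((n:ℝ)+1)/C := by
      rw [hC2]; field_simp
    rw [e1, e2, ← mul_sub, div_sub_div_same]
    have : ((n:ℝ)+1+((k:ℝ)+1)) - ((n:ℝ)+1) = (k:ℝ)+1 := by ring
    rw [this]
    field_simp
  have hq0 : q 0 = 1/(((k:ℝ)+1)*((k+1).factorial : ℝ)) := by
    rw [hq]
    simp only [Nat.cast_zero, zero_add]
    rw [show (∏ i ∈ range (k+1), (1+(i:ℝ))) = ((k+1).factorial : ℝ) by
      rw [← Finset.prod_range_add_one_eq_factorial]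
      push_cast
      exact Finset.prod_congr rfl (fun i _ => by ring)]
    rw [one_div_mul_one_div]
  apply hasSum_of_tendsto_nonneg
  · intro n; positivity
  · have hsum : ∀ N, ∑ n ∈ range N, (1/∏ i ∈ range (k+2), ((n:ℝ)+1+i)) = q 0 - q N := by
      intro N
      simp only [htel]
      exact Finset.sum_range_sub' q N
    have hbound : ∀ n : ℕ, q n ≤ (1/((k:ℝ)+1)) * (1/((n:ℝ)+1)) := by
      intro n
      rw [hq]
      simp only []
      apply mul_le_mul_of_nonneg_left ?_ (by positivity)
      apply one_div_le_one_div_of_le (by positivity)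
      calc (n:ℝ)+1 = 1 * ((n:ℝ)+1+(0:ℕ)) := by norm_num
        _ ≤ (∏ i ∈ range k, ((n:ℝ)+1+(i+1:ℕ))) * ((n:ℝ)+1+(0:ℕ)) := by
            apply mul_le_mul_of_nonneg_right ?_ (by positivity)
            calc (1:ℝ) = ∏ i ∈ range k, (1:ℝ) := by simp
              _ ≤ ∏ i ∈ range k, ((n:ℝ)+1+(i+1:ℕ)) :=
                  Finset.prod_le_prod (fun i _ => by norm_num)
                    (fun i _ => by push_cast; linarith [Nat.cast_nonneg (α := ℝ) n,
                      Nat.cast_nonneg (α := ℝ) i])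
        _ = ∏ i ∈ range (k+1), ((n:ℝ)+1+i) :=
            (Finset.prod_range_succ' (fun i => (n:ℝ)+1+i) k).symm
    have hqnonneg : ∀ n, 0 ≤ q n := by
      intro n; rw [hq]; positivity
    have hqt : Tendsto q atTop (nhds 0) := by
      apply squeeze_zero hqnonneg hbound
      rw [show (0:ℝ) = (1/((k:ℝ)+1)) * 0 by ring]
      exact (tendsto_one_div_add_atTop_nhds_zero_nat).const_mul _
    have := (tendsto_const_nhds (x := q 0)).sub hqt
    rw [sub_zero] at this
    simp only [hsum]
    rw [← hq0]
    exact this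

/-- Kluyver's number `a_k = (1/k!) ∫₀¹ x (1−x)_{k−1} dx`, where
`(z)_n = ∏_{j=0}^{n-1} (z + j)` is the Pochhammer symbol. -/
noncomputable def kluyverA (k : ℕ) : ℝ :=
  (1 / (Nat.factorial k)) * ∫ x in (0:ℝ)..1, x * ∏ j ∈ Finset.range (k - 1), (1 - x + j)

lemma ck_cont (k : ℕ) : Continuous (ck k) := by
  unfold ck
  exact continuous_id.mul (continuous_finset_prod _ (fun j _ => by continuity))

lemma ck_nonneg (k : ℕ) {x : ℝ} (hx0 : 0 ≤ x) (hx1 : x ≤ 1) : 0 ≤ ck k x :=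
  mul_nonneg hx0 (Finset.prod_nonneg (fun j _ => by
    have : (0:ℝ) ≤ j := Nat.cast_nonneg j
    linarith))

lemma ck_le (k : ℕ) {x : ℝ} (hx0 : 0 ≤ x) (hx1 : x ≤ 1) : ck k x ≤ (k.factorial : ℝ) := by
  unfold ck
  calc x * ∏ j ∈ range k, (1 - x + j) ≤ 1 * ∏ j ∈ range k, ((j:ℝ)+1) := by
        apply mul_le_mul hx1 ?_ (Finset.prod_nonneg (fun j _ => by
          have : (0:ℝ) ≤ j := Nat.cast_nonneg j; linarith)) zero_le_one
        exact Finset.prod_le_prod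
          (fun j _ => by have : (0:ℝ) ≤ j := Nat.cast_nonneg j; linarith)
          (fun j _ => by have : (0:ℝ) ≤ j := Nat.cast_nonneg j; linarith)
    _ = (k.factorial : ℝ) := by
        rw [one_mul, ← Finset.prod_range_add_one_eq_factorial]
        push_cast
        rfl

noncomputable def klI (k : ℕ) : ℝ := ∫ x in Set.Ioc (0:ℝ) 1, ck k x

lemma klI_nonneg (k : ℕ) : 0 ≤ klI k :=
  setIntegral_nonneg measurableSet_Ioc (fun x hx => ck_nonneg k hx.1.le hx.2)

lemma klI_int (k : ℕ) : IntegrableOn (ck k) (Set.Ioc (0:ℝ) 1) :=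
  ((ck_cont k).continuousOn.integrableOn_Icc).mono_set Set.Ioc_subset_Icc_self

lemma klI_le (k : ℕ) : klI k ≤ (k.factorial : ℝ) := by
  unfold klI
  calc ∫ x in Set.Ioc (0:ℝ) 1, ck k x ≤ ∫ _x in Set.Ioc (0:ℝ) 1, (k.factorial : ℝ) := by
        apply setIntegral_mono_on (klI_int k) (integrableOn_const measure_Ioc_lt_top.ne)
          measurableSet_Ioc (fun x hx => ck_le k hx.1.le hx.2)
    _ = (k.factorial : ℝ) := by simp

lemma kluyverA_eq (k : ℕ) : kluyverA (k+1) = klI k / ((k+1).factorial : ℝ) := by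
  unfold kluyverA klI ck
  rw [intervalIntegral.integral_of_le zero_le_one]
  simp only [Nat.add_sub_cancel]
  rw [MeasureTheory.integral_Ioc_eq_integral_Ioo, ← MeasureTheory.integral_Ioc_eq_integral_Ioo]
  ring

lemma g_int (n : ℕ) : IntegrableOn (fun x : ℝ => x/((n+1)*((n+1)+x))) (Set.Ioc 0 1) := by
  apply ContinuousOn.integrableOn_Icc (a := (0:ℝ)) (b := 1) ?_ |>.mono_set
    Set.Ioc_subset_Icc_self
  apply ContinuousOn.div continuousOn_id (by fun_prop)
  intro x hx
  have := hx.1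
  positivity

lemma g_nonneg (n : ℕ) {x : ℝ} (hx0 : 0 ≤ x) : 0 ≤ x/((n+1)*((n+1:ℝ)+x)) := by positivity

lemma lemB' (n : ℕ) : ∫ x in Set.Ioc (0:ℝ) 1, x/((n+1)*((n+1)+x))
    = 1/(n+1:ℝ) - Real.log ((n+2)/(n+1)) := by
  rw [← intervalIntegral.integral_of_le zero_le_one]
  exact lemB n

/-- Kluyver's formula for Euler's constant: `γ = ∑_{k=1}^∞ a_k / k`. -/
theorem kluyver_formula :
    Real.eulerMascheroniConstant = ∑' k : ℕ, kluyverA (k + 1) / (k + 1) := by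
  have hμ : ∀ {p : ℝ → Prop}, (∀ x ∈ Set.Ioc (0:ℝ) 1, p x) →
      (∀ᵐ x ∂(volume.restrict (Set.Ioc (0:ℝ) 1)), p x) := by
    intro p hp
    exact (ae_restrict_iff' measurableSet_Ioc).mpr (ae_of_all _ hp)
  -- RHS terms
  have hterm : ∀ k : ℕ, kluyverA (k+1) / ((k:ℝ)+1)
      = klI k / (((k:ℝ)+1) * ((k+1).factorial : ℝ)) := by
    intro k
    rw [kluyverA_eq k, div_div, mul_comm ((k+1).factorial : ℝ) ((k:ℝ)+1)]
  have hFnonneg : ∀ k : ℕ, 0 ≤ klI k / (((k:ℝ)+1) * ((k+1).factorial : ℝ)) :=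
    fun k => div_nonneg (klI_nonneg k) (by positivity)
  have hg2 : Summable (fun k : ℕ => 1/((k:ℝ)+1)^2) := by
    have h2 : Summable (fun n : ℕ => 1/(n:ℝ)^2) :=
      Real.summable_one_div_nat_pow.mpr one_lt_two
    have h3 := (summable_nat_add_iff 1).mpr h2
    apply h3.congr
    intro k
    push_cast
    ring
  have hle : ∀ k : ℕ, klI k / (((k:ℝ)+1) * ((k+1).factorial : ℝ)) ≤ 1/((k:ℝ)+1)^2 := by
    intro k
    have hd : (0:ℝ) < ((k:ℝ)+1) * ((k+1).factorial : ℝ) := by positivity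
    calc klI k / (((k:ℝ)+1) * ((k+1).factorial : ℝ))
        ≤ (k.factorial : ℝ) / (((k:ℝ)+1) * ((k+1).factorial : ℝ)) :=
          div_le_div₀ (by positivity) (klI_le k) hd le_rfl
      _ = 1/((k:ℝ)+1)^2 := by
          rw [Nat.factorial_succ]
          push_cast
          rw [div_eq_div_iff (by positivity) (by positivity)]
          ring
  have hFsummable : Summable (fun k : ℕ => klI k / (((k:ℝ)+1) * ((k+1).factorial : ℝ))) :=
    Summable.of_nonneg_of_le hFnonneg hle hg2
  -- main ENNReal computation
  have key : ENNReal.ofReal Real.eulerMascheroniConstant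
      = ENNReal.ofReal (∑' k : ℕ, klI k / (((k:ℝ)+1) * ((k+1).factorial : ℝ))) := by
    have htnonneg : ∀ n : ℕ, 0 ≤ 1/(n+1:ℝ) - Real.log ((n+2)/(n+1)) := by
      intro n
      rw [← lemB' n]
      exact setIntegral_nonneg measurableSet_Ioc (fun x hx => g_nonneg n hx.1.le)
    calc ENNReal.ofReal Real.eulerMascheroniConstant
        = ∑' n : ℕ, ENNReal.ofReal (1/(n+1:ℝ) - Real.log ((n+2)/(n+1))) := by
          rw [← lemA.tsum_eq]
          exact ENNReal.ofReal_tsum_of_nonneg htnonneg lemA.summable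
      _ = ∑' n : ℕ, ∫⁻ x in Set.Ioc (0:ℝ) 1, ENNReal.ofReal (x/((n+1)*((n+1)+x))) := by
          apply tsum_congr; intro n
          rw [← lemB' n]
          exact ofReal_integral_eq_lintegral_ofReal (g_int n)
            (hμ (fun x hx => g_nonneg n hx.1.le))
      _ = ∑' n : ℕ, ∫⁻ x in Set.Ioc (0:ℝ) 1,
            ∑' k : ℕ, ENNReal.ofReal (ck k x / ∏ i ∈ range (k+2), ((n:ℝ)+1+i)) := by
          apply tsum_congr; intro n
          apply lintegral_congr_ae
          apply hμ
          intro x hx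
          show ENNReal.ofReal (x / (((n:ℝ)+1)*(((n:ℝ)+1)+x)))
            = ∑' k : ℕ, ENNReal.ofReal (ck k x / ∏ i ∈ range (k+2), ((n:ℝ)+1+i))
          rw [← (lemC n hx.1.le hx.2).tsum_eq,
            ENNReal.ofReal_tsum_of_nonneg
              (fun k => div_nonneg (ck_nonneg k hx.1.le hx.2) (kprodpos n (k+2)).le)
              (lemC n hx.1.le hx.2).summable]
      _ = ∑' n : ℕ, ∑' k : ℕ, ∫⁻ x in Set.Ioc (0:ℝ) 1,
            ENNReal.ofReal (ck k x / ∏ i ∈ range (k+2), ((n:ℝ)+1+i)) := by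
          apply tsum_congr; intro n
          apply lintegral_tsum
          intro k
          apply Measurable.aemeasurable
          apply ENNReal.measurable_ofReal.comp
          exact ((ck_cont k).div_const _).measurable
      _ = ∑' k : ℕ, ∑' n : ℕ, ∫⁻ x in Set.Ioc (0:ℝ) 1,
            ENNReal.ofReal (ck k x / ∏ i ∈ range (k+2), ((n:ℝ)+1+i)) := ENNReal.tsum_comm
      _ = ∑' k : ℕ, ∑' n : ℕ,
            ENNReal.ofReal (klI k / ∏ i ∈ range (k+2), ((n:ℝ)+1+i)) := by
          apply tsum_congr; intro k
          apply tsum_congr; intro n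
          rw [← ofReal_integral_eq_lintegral_ofReal ((klI_int k).div_const _)
            (hμ (fun x hx => div_nonneg (ck_nonneg k hx.1.le hx.2) (kprodpos n (k+2)).le))]
          congr 1
          rw [integral_div]
          rfl
      _ = ∑' k : ℕ, ENNReal.ofReal (klI k / (((k:ℝ)+1) * ((k+1).factorial : ℝ))) := by
          apply tsum_congr; intro k
          have hD : HasSum (fun n : ℕ => klI k / ∏ i ∈ range (k+2), ((n:ℝ)+1+i))
              (klI k / (((k:ℝ)+1) * ((k+1).factorial : ℝ))) := by
            have := (lemD k).mul_left (klI k)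
            simpa only [mul_one_div] using this
          rw [← hD.tsum_eq]
          exact (ENNReal.ofReal_tsum_of_nonneg
            (fun n => div_nonneg (klI_nonneg k) (kprodpos n (k+2)).le) hD.summable).symm
      _ = ENNReal.ofReal (∑' k : ℕ, klI k / (((k:ℝ)+1) * ((k+1).factorial : ℝ))) :=
          (ENNReal.ofReal_tsum_of_nonneg hFnonneg hFsummable).symm
  have hγ : 0 ≤ Real.eulerMascheroniConstant := by
    linarith [Real.one_half_lt_eulerMascheroniConstant]
  have hR : 0 ≤ ∑' k : ℕ, klI k / (((k:ℝ)+1) * ((k+1).factorial : ℝ)) :=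
    tsum_nonneg hFnonneg
  have := (ENNReal.ofReal_eq_ofReal_iff hγ hR).mp key
  rw [this]
  apply tsum_congr
  intro k
  exact (hterm k).symm
end
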